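/- Let X_1,…,X_n ∈ {0,1} be independent random variables and let f : {0,1}^n → ℝ be (a,b)-self-bounding with a ≥ 1/3, and set Z = f(X_1,…,X_n). Then for every t with 0 < t ≤ E[Z], Pr[Z ≤ E[Z] − t] ≤ e^{−t² / (2(a E[Z] + b))}. -/

import Mathlib

open MeasureTheory ProbabilityTheory Finset

open Finset Real

namespace SBaux

variable {n : ℕ}

abbrev C (n : ℕ) := Fin n → Bool

variable (p : Fin n → Bool → ℝ)

/-- one-coordinate averaging operator -/
def Ei (i : Fin n) (h : C n → ℝ) : C n → ℝ := fun y =>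
  p i false * h (Function.update y i false) + p i true * h (Function.update y i true)

/-- iterated averaging over a list of coordinates -/
def ESl : List (Fin n) → (C n → ℝ) → (C n → ℝ)
  | [], h => h
  | i :: l, h => Ei p i (ESl l h)

def W : C n → ℝ := fun y => ∏ i, p i (y i)

def Exp (h : C n → ℝ) : ℝ := ∑ y : C n, W p y * h y

def Inv (i : Fin n) (h : C n → ℝ) : Prop := ∀ y b, h (Function.update y i b) = h y

variable {p}

section basic

lemma Ei_mono {i : Fin n} (hp0 : ∀ i b, 0 ≤ p i b) {h k : C n → ℝ} (hhk : ∀ y, h y ≤ k y) :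
    ∀ y, Ei p i h y ≤ Ei p i k y := fun y =>
  add_le_add (mul_le_mul_of_nonneg_left (hhk _) (hp0 _ _))
    (mul_le_mul_of_nonneg_left (hhk _) (hp0 _ _))

lemma ESl_mono {l : List (Fin n)} (hp0 : ∀ i b, 0 ≤ p i b) {h k : C n → ℝ}
    (hhk : ∀ y, h y ≤ k y) : ∀ y, ESl p l h y ≤ ESl p l k y := by
  induction l with
  | nil => exact hhk
  | cons i l ih => exact Ei_mono hp0 ih

lemma Ei_add {i : Fin n} (h k : C n → ℝ) :
    Ei p i (fun y => h y + k y) = fun y => Ei p i h y + Ei p i k y := by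
  funext y; simp only [Ei]; ring

lemma Ei_sub {i : Fin n} (h k : C n → ℝ) :
    Ei p i (fun y => h y - k y) = fun y => Ei p i h y - Ei p i k y := by
  funext y; simp only [Ei]; ring

lemma ESl_sub {l : List (Fin n)} (h k : C n → ℝ) :
    ESl p l (fun y => h y - k y) = fun y => ESl p l h y - ESl p l k y := by
  induction l with
  | nil => rfl
  | cons i l ih => simp only [ESl, ih, Ei_sub]

lemma Ei_pos {i : Fin n} (hp0 : ∀ i b, 0 ≤ p i b) (hp1 : ∀ i, p i false + p i true = 1)
    {h : C n → ℝ} (hh : ∀ y, 0 < h y) : ∀ y, 0 < Ei p i h y := by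
  intro y
  have h1 := hh (Function.update y i false)
  have h2 := hh (Function.update y i true)
  rcases le_or_gt (p i false) 0 with hF | hF
  · have hF0 : p i false = 0 := le_antisymm hF (hp0 i false)
    have : p i true = 1 := by have := hp1 i; linarith
    simp [Ei, hF0, this, h2]
  · have := mul_nonneg (hp0 i true) h2.le
    have := mul_pos hF h1
    simp only [Ei]; linarith

lemma ESl_pos {l : List (Fin n)} (hp0 : ∀ i b, 0 ≤ p i b)
    (hp1 : ∀ i, p i false + p i true = 1) {h : C n → ℝ} (hh : ∀ y, 0 < h y) :
    ∀ y, 0 < ESl p l h y := by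
  induction l with
  | nil => exact hh
  | cons i l ih => exact Ei_pos hp0 hp1 ih

lemma Inv_Ei_self (i : Fin n) (h : C n → ℝ) : Inv i (Ei p i h) := by
  intro y b
  simp only [Ei, Function.update_idem]

lemma Inv_Ei (i j : Fin n) {h : C n → ℝ} (hh : Inv i h) : Inv i (Ei p j h) := by
  intro y b
  rcases eq_or_ne j i with rfl | hne
  · simp only [Ei, Function.update_idem]
  · simp only [Ei, Function.update_comm hne.symm]
    rw [hh, hh]

lemma Inv_ESl (i : Fin n) (l : List (Fin n)) {h : C n → ℝ} (hh : Inv i h) :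
    Inv i (ESl p l h) := by
  induction l with
  | nil => exact hh
  | cons j l ih => exact Inv_Ei i j ih

lemma Inv_ESl_mem {i : Fin n} {l : List (Fin n)} (hi : i ∈ l) (h : C n → ℝ) :
    Inv i (ESl p l h) := by
  induction l with
  | nil => cases hi
  | cons j l ih =>
    rcases List.mem_cons.1 hi with rfl | hi'
    · exact Inv_Ei_self i _
    · exact Inv_Ei i j (ih hi')

lemma Ei_comm (i j : Fin n) (hij : i ≠ j) (h : C n → ℝ) :
    Ei p i (Ei p j h) = Ei p j (Ei p i h) := by
  funext y
  simp only [Ei, Function.update_comm hij]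
  ring

lemma Ei_ESl_comm (i : Fin n) (l : List (Fin n)) (hi : i ∉ l) (h : C n → ℝ) :
    Ei p i (ESl p l h) = ESl p l (Ei p i h) := by
  induction l with
  | nil => rfl
  | cons j l ih =>
    have hij : i ≠ j := fun h' => hi (h' ▸ List.mem_cons_self)
    have hi' : i ∉ l := fun h' => hi (List.mem_cons_of_mem _ h')
    simp only [ESl]
    rw [Ei_comm i j hij, ih hi']

lemma Ei_mul_inv {i : Fin n} {k : C n → ℝ} (hk : Inv i k) (M : C n → ℝ) :
    ∀ y, Ei p i (fun x => M x * k x) y = Ei p i M y * k y := by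
  intro y
  simp only [Ei]
  rw [hk, hk]; ring

lemma Ei_of_inv {i : Fin n} (hp1 : ∀ i, p i false + p i true = 1)
    {k : C n → ℝ} (hk : Inv i k) : ∀ y, Ei p i k y = k y := by
  intro y
  simp only [Ei]
  rw [hk, hk, ← add_mul, hp1 i, one_mul]

/-- a function invariant in every coordinate is constant -/
lemma const_of_inv {k : C n → ℝ} (hk : ∀ i, Inv i k) (y z : C n) : k y = k z := by
  have H : ∀ s : Finset (Fin n), k (s.piecewise z y) = k y := by
    intro s
    induction s using Finset.induction_on with
    | empty => simp
    | insert _ _ hnotmem ih =>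
      rw [Finset.piecewise_insert, hk _ _ _, ih]
  have := H Finset.univ
  rwa [Finset.piecewise_univ, eq_comm] at this

end basic

end SBaux

namespace SBaux
variable {n : ℕ} {p : Fin n → Bool → ℝ}

section exp

lemma W_nonneg (hp0 : ∀ i b, 0 ≤ p i b) (y : C n) : 0 ≤ W p y :=
  Finset.prod_nonneg fun i _ => hp0 i _

lemma sum_W (hp1 : ∀ i, p i false + p i true = 1) : ∑ y : C n, W p y = 1 := by
  have h1 : ∀ i : Fin n, ∑ b : Bool, p i b = 1 := by
    intro i; rw [Fintype.sum_bool, add_comm]; exact hp1 i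
  have h2 : (∏ i : Fin n, ∑ b : Bool, p i b) = 1 := by
    rw [Finset.prod_congr rfl fun i _ => h1 i, Finset.prod_const_one]
  rw [Finset.prod_univ_sum] at h2
  rw [← h2, Fintype.piFinset_univ]
  rfl

lemma Exp_mono (hp0 : ∀ i b, 0 ≤ p i b) {h k : C n → ℝ} (hhk : ∀ y, h y ≤ k y) :
    Exp p h ≤ Exp p k :=
  Finset.sum_le_sum fun y _ => mul_le_mul_of_nonneg_left (hhk y) (W_nonneg hp0 y)

lemma Exp_const (hp1 : ∀ i, p i false + p i true = 1) (r : ℝ) :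
    Exp p (fun _ => r) = r := by
  simp only [Exp]
  rw [← Finset.sum_mul, sum_W hp1, one_mul]

def Wer (i : Fin n) : C n → ℝ := fun y => ∏ j ∈ Finset.univ.erase i, p j (y j)

lemma W_eq (i : Fin n) (y : C n) : W p y = p i (y i) * Wer (p := p) i y :=
  (Finset.mul_prod_erase Finset.univ _ (Finset.mem_univ i)).symm

lemma Wer_update (i : Fin n) (y : C n) (b : Bool) :
    Wer (p := p) i (Function.update y i b) = Wer (p := p) i y := by
  refine Finset.prod_congr rfl fun j hj => ?_
  rw [Function.update_of_ne (Finset.ne_of_mem_erase hj)]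

def flip (i : Fin n) : Equiv.Perm (C n) :=
  Function.Involutive.toPerm (fun y => Function.update y i (!(y i))) (by
    intro y
    simp only [Function.update_self, Function.update_idem, Bool.not_not]
    exact Function.update_eq_self i y)

lemma flip_apply (i : Fin n) (y : C n) : flip i y = Function.update y i (!(y i)) := rfl

lemma Exp_Ei (hp1 : ∀ i, p i false + p i true = 1) (i : Fin n) (k : C n → ℝ) :
    Exp p (Ei p i k) = Exp p k := by
  classical
  set R : C n → ℝ := fun y =>
    p i false * k (Function.update y i false) + p i true * k (Function.update y i true) with hR
  have hRinv : ∀ y b, R (Function.update y i b) = R y := by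
    intro y b; simp only [hR, Function.update_idem]
  -- LHS rewrite
  have hL : Exp p (Ei p i k) = ∑ y : C n, p i (y i) * Wer (p := p) i y * R y := by
    refine Finset.sum_congr rfl fun y _ => ?_
    rw [W_eq i y]; rfl
  have hL2 : ∑ y : C n, p i (y i) * Wer (p := p) i y * R y
      = ∑ y : C n, p i (!(y i)) * Wer (p := p) i y * R y := by
    have := Equiv.sum_comp (flip i)
      (fun y => p i (y i) * Wer (p := p) i y * R y)
    rw [← this]
    refine Finset.sum_congr rfl fun y _ => ?_
    simp only [flip_apply, Function.update_self, Wer_update, hRinv]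
  have hLsum : 2 * Exp p (Ei p i k) = ∑ y : C n, Wer (p := p) i y * R y := by
    rw [hL]
    rw [two_mul]
    nth_rewrite 2 [hL2]
    rw [← Finset.sum_add_distrib]
    refine Finset.sum_congr rfl fun y _ => ?_
    have hb : p i (y i) + p i (!(y i)) = 1 := by
      cases hyi : y i <;> simp only [Bool.not_true, Bool.not_false] <;>
        [exact hp1 i; (rw [add_comm]; exact hp1 i)]
    linear_combination Wer (p := p) i y * R y * hb
  -- RHS rewrite
  have hRt : Exp p k = ∑ y : C n,
      p i (y i) * Wer (p := p) i y * k (Function.update y i (y i)) := by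
    refine Finset.sum_congr rfl fun y _ => ?_
    rw [W_eq i y, Function.update_eq_self]
  have hRsum : 2 * Exp p k = ∑ y : C n, Wer (p := p) i y * R y := by
    rw [hRt, two_mul]
    have h2 : ∑ y : C n, p i (y i) * Wer (p := p) i y * k (Function.update y i (y i))
        = ∑ y : C n, p i (!(y i)) * Wer (p := p) i y * k (Function.update y i (!(y i))) := by
      have := Equiv.sum_comp (flip i)
        (fun y => p i (y i) * Wer (p := p) i y * k (Function.update y i (y i)))
      rw [← this]
      refine Finset.sum_congr rfl fun y _ => ?_
      simp only [flip_apply, Function.update_self, Wer_update, Function.update_idem]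
    nth_rewrite 2 [h2]
    rw [← Finset.sum_add_distrib]
    refine Finset.sum_congr rfl fun y _ => ?_
    cases hyi : y i <;>
      simp only [hR, hyi, Bool.not_true, Bool.not_false] <;> ring
  linarith [hLsum, hRsum]

lemma Exp_ESl (hp1 : ∀ i, p i false + p i true = 1) (l : List (Fin n)) (k : C n → ℝ) :
    Exp p (ESl p l k) = Exp p k := by
  induction l with
  | nil => rfl
  | cons i l ih => rw [ESl, Exp_Ei hp1, ih]

lemma ESl_full (hp1 : ∀ i, p i false + p i true = 1) (k : C n → ℝ) (y : C n) :
    ESl p (List.finRange n) k y = Exp p k := by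
  have hconst : ∀ z, ESl p (List.finRange n) k z = ESl p (List.finRange n) k y :=
    fun z => const_of_inv (fun i => Inv_ESl_mem (List.mem_finRange i) k) z y
  have : Exp p (ESl p (List.finRange n) k) = ESl p (List.finRange n) k y := by
    calc Exp p (ESl p (List.finRange n) k)
        = Exp p (fun _ => ESl p (List.finRange n) k y) := by
          unfold Exp; exact Finset.sum_congr rfl fun z _ => by rw [hconst z]
      _ = ESl p (List.finRange n) k y := Exp_const hp1 _
  rw [← this, Exp_ESl hp1]

end exp
end SBaux

namespace SBaux
variable {n : ℕ} {p : Fin n → Bool → ℝ}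

section jensen

/-- two-point weighted log-sum inequality -/
lemma logsum2 {q0 q1 x0 x1 y0 y1 : ℝ} (hq0 : 0 ≤ q0) (hq1 : 0 ≤ q1) (hq : q0 + q1 = 1)
    (hx0 : 0 < x0) (hx1 : 0 < x1) (hy0 : 0 < y0) (hy1 : 0 < y1) :
    (q0 * x0 + q1 * x1) * Real.log ((q0 * x0 + q1 * x1) / (q0 * y0 + q1 * y1))
      ≤ q0 * (x0 * Real.log (x0 / y0)) + q1 * (x1 * Real.log (x1 / y1)) := by
  set X := q0 * x0 + q1 * x1 with hX
  set Y := q0 * y0 + q1 * y1 with hY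
  have hXpos : 0 < X := by
    have h1 : q0 * min x0 x1 + q1 * min x0 x1 ≤ X :=
      add_le_add (mul_le_mul_of_nonneg_left (min_le_left _ _) hq0)
        (mul_le_mul_of_nonneg_left (min_le_right _ _) hq1)
    have h2 : (0:ℝ) < min x0 x1 := lt_min hx0 hx1
    nlinarith
  have hYpos : 0 < Y := by
    have h1 : q0 * min y0 y1 + q1 * min y0 y1 ≤ Y :=
      add_le_add (mul_le_mul_of_nonneg_left (min_le_left _ _) hq0)
        (mul_le_mul_of_nonneg_left (min_le_right _ _) hq1)
    have h2 : (0:ℝ) < min y0 y1 := lt_min hy0 hy1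
    nlinarith
  have key : ∀ q xb yb : ℝ, 0 ≤ q → 0 < xb → 0 < yb →
      q * xb - q * yb * (X / Y) ≤ q * xb * (Real.log (xb / yb) - Real.log (X / Y)) := by
    intro q xb yb hq hxb hyb
    have hs : 0 < xb * Y / (yb * X) := by positivity
    have hlog : 1 - (yb * X) / (xb * Y) ≤ Real.log (xb * Y / (yb * X)) := by
      have := Real.one_sub_inv_le_log_of_pos hs
      rwa [inv_div] at this
    have hlogeq : Real.log (xb * Y / (yb * X)) = Real.log (xb / yb) - Real.log (X / Y) := by
      rw [Real.log_div (by positivity) (by positivity), Real.log_mul hxb.ne' hYpos.ne',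
        Real.log_mul hyb.ne' hXpos.ne', Real.log_div hxb.ne' hyb.ne',
        Real.log_div hXpos.ne' hYpos.ne']
      ring
    rw [hlogeq] at hlog
    have := mul_le_mul_of_nonneg_left hlog (mul_nonneg hq hxb.le)
    have heq : q * xb * (1 - (yb * X) / (xb * Y)) = q * xb - q * yb * (X / Y) := by
      field_simp
    linarith [heq ▸ this]
  have k0 := key q0 x0 y0 hq0 hx0 hy0
  have k1 := key q1 x1 y1 hq1 hx1 hy1
  have hsum : (q0 * x0 - q0 * y0 * (X / Y)) + (q1 * x1 - q1 * y1 * (X / Y)) = 0 := by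
    have : Y * (X / Y) = X := mul_div_cancel₀ X hYpos.ne'
    nlinarith [this]
  nlinarith [k0, k1, hsum]

/-- Jensen for `x log (x/y)` under iterated averaging -/
lemma ESl_logsum (hp0 : ∀ i b, 0 ≤ p i b) (hp1 : ∀ i, p i false + p i true = 1)
    (l : List (Fin n)) {h k : C n → ℝ} (hh : ∀ y, 0 < h y) (hk : ∀ y, 0 < k y) (y : C n) :
    ESl p l h y * Real.log (ESl p l h y / ESl p l k y)
      ≤ ESl p l (fun z => h z * Real.log (h z / k z)) y := by
  induction l generalizing y with
  | nil => exact le_refl _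
  | cons i l ih =>
    have hM := fun b => ESl_pos (l := l) hp0 hp1 hh (Function.update y i b)
    have hN := fun b => ESl_pos (l := l) hp0 hp1 hk (Function.update y i b)
    calc ESl p (i :: l) h y * Real.log (ESl p (i :: l) h y / ESl p (i :: l) k y)
        ≤ p i false * (ESl p l h (Function.update y i false) *
            Real.log (ESl p l h (Function.update y i false) /
              ESl p l k (Function.update y i false)))
          + p i true * (ESl p l h (Function.update y i true) *
            Real.log (ESl p l h (Function.update y i true) /
              ESl p l k (Function.update y i true))) := by
          exact logsum2 (hp0 i false) (hp0 i true) (hp1 i)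
            (hM false) (hM true) (hN false) (hN true)
      _ ≤ ESl p (i :: l) (fun z => h z * Real.log (h z / k z)) y := by
          exact add_le_add
            (mul_le_mul_of_nonneg_left (ih _) (hp0 i false))
            (mul_le_mul_of_nonneg_left (ih _) (hp0 i true))

/-- Jensen for the square under iterated averaging -/
lemma ESl_sq (hp0 : ∀ i b, 0 ≤ p i b) (hp1 : ∀ i, p i false + p i true = 1)
    (l : List (Fin n)) (h : C n → ℝ) (y : C n) :
    (ESl p l h y) ^ 2 ≤ ESl p l (fun z => h z ^ 2) y := by
  induction l generalizing y with
  | nil => exact le_refl _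
  | cons i l ih =>
    have sq2 : ∀ q0 q1 x0 x1 : ℝ, 0 ≤ q0 → 0 ≤ q1 → q0 + q1 = 1 →
        (q0 * x0 + q1 * x1) ^ 2 ≤ q0 * x0 ^ 2 + q1 * x1 ^ 2 := by
      intro q0 q1 x0 x1 h0 h1 hq
      nlinarith [sq_nonneg (x0 - x1), mul_nonneg h0 h1]
    calc (ESl p (i :: l) h y) ^ 2
        ≤ p i false * (ESl p l h (Function.update y i false)) ^ 2
          + p i true * (ESl p l h (Function.update y i true)) ^ 2 :=
          sq2 _ _ _ _ (hp0 i false) (hp0 i true) (hp1 i)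
      _ ≤ ESl p (i :: l) (fun z => h z ^ 2) y :=
          add_le_add (mul_le_mul_of_nonneg_left (ih _) (hp0 i false))
            (mul_le_mul_of_nonneg_left (ih _) (hp0 i true))

end jensen
end SBaux

namespace SBaux
variable {n : ℕ} {p : Fin n → Bool → ℝ}

section tens

lemma Ei_map_sum (i : Fin n) (l : List (Fin n)) (F : Fin n → C n → ℝ) (y : C n) :
    Ei p i (fun z => (l.map (fun j => F j z)).sum) y
      = (l.map (fun j => Ei p i (F j) y)).sum := by
  induction l with
  | nil => simp [Ei]
  | cons j l ih =>
    simp only [List.map_cons, List.sum_cons]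
    rw [← ih, Ei_add (F j) (fun z => (l.map (fun j' => F j' z)).sum)]

/-- tensorization of entropy over a duplicate-free list of coordinates -/
lemma tens (hp0 : ∀ i b, 0 ≤ p i b) (hp1 : ∀ i, p i false + p i true = 1)
    (l : List (Fin n)) (hl : l.Nodup) (h : C n → ℝ) (hh : ∀ y, 0 < h y) (y : C n) :
    ESl p l (fun z => h z * Real.log (h z)) y - ESl p l h y * Real.log (ESl p l h y)
      ≤ (l.map (fun i =>
          ESl p l (fun z => h z * Real.log (h z / Ei p i h z)) y)).sum := by
  induction l generalizing y with
  | nil => simp [ESl]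
  | cons i l ih =>
    have hi : i ∉ l := (List.nodup_cons.1 hl).1
    have hl' : l.Nodup := (List.nodup_cons.1 hl).2
    set M : C n → ℝ := ESl p l h with hM
    set K : C n → ℝ := ESl p l (fun z => h z * Real.log (h z)) with hK
    have hMpos : ∀ x, 0 < M x := ESl_pos hp0 hp1 hh
    have hEih : ∀ x, 0 < Ei p i h x := Ei_pos hp0 hp1 hh
    set N : C n → ℝ := ESl p l (Ei p i h) with hN
    have hNpos : ∀ x, 0 < N x := ESl_pos hp0 hp1 hEih
    have hcomm : Ei p i M = N := Ei_ESl_comm i l hi h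
    have hNinv : Inv i N := Inv_ESl i l (Inv_Ei_self i h)
    -- second bracket
    have hstep2 : Ei p i (fun x => M x * Real.log (M x)) y
          - Ei p i M y * Real.log (Ei p i M y)
        ≤ ESl p (i :: l) (fun z => h z * Real.log (h z / Ei p i h z)) y := by
      have hJ : ∀ x, M x * Real.log (M x / N x)
          ≤ ESl p l (fun z => h z * Real.log (h z / Ei p i h z)) x :=
        ESl_logsum hp0 hp1 l hh hEih
      have hmono := Ei_mono (i := i) hp0 hJ y
      have hrw : Ei p i (fun x => M x * Real.log (M x / N x)) y
          = Ei p i (fun x => M x * Real.log (M x)) y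
            - Ei p i (fun x => M x * Real.log (N x)) y := by
        have : (fun x => M x * Real.log (M x / N x))
            = fun x => M x * Real.log (M x) - M x * Real.log (N x) := by
          funext x
          rw [Real.log_div (hMpos x).ne' (hNpos x).ne']
          ring
        rw [this, Ei_sub]
      have hpull : Ei p i (fun x => M x * Real.log (N x)) y
          = Ei p i M y * Real.log (N y) :=
        Ei_mul_inv (fun z b => by rw [hNinv z b]) M y
      have hNy : N y = Ei p i M y := by rw [hcomm]
      rw [hrw, hpull, hNy] at hmono
      exact le_trans (le_of_eq rfl) hmono
    -- first bracket
    have hstep1 : Ei p i (fun z => K z - M z * Real.log (M z)) y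
        ≤ (l.map (fun j => ESl p (i :: l)
            (fun z => h z * Real.log (h z / Ei p j h z)) y)).sum := by
      have hIH : ∀ x, K x - M x * Real.log (M x)
          ≤ (l.map (fun j =>
              ESl p l (fun z => h z * Real.log (h z / Ei p j h z)) x)).sum :=
        fun x => ih hl' x
      have hmono := Ei_mono (i := i) hp0 hIH y
      rwa [Ei_map_sum] at hmono
    have hsplit : ESl p (i :: l) (fun z => h z * Real.log (h z)) y
          - ESl p (i :: l) h y * Real.log (ESl p (i :: l) h y)
        = Ei p i (fun z => K z - M z * Real.log (M z)) y
          + (Ei p i (fun x => M x * Real.log (M x)) y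
            - Ei p i M y * Real.log (Ei p i M y)) := by
      rw [Ei_sub]
      simp only [ESl]
      ring
    rw [hsplit]
    simp only [List.map_cons, List.sum_cons]
    linarith [hstep1, hstep2]

/-- entropy tensorization, `Exp` form -/
lemma entropy_tens (hp0 : ∀ i b, 0 ≤ p i b) (hp1 : ∀ i, p i false + p i true = 1)
    (h : C n → ℝ) (hh : ∀ y, 0 < h y) :
    Exp p (fun z => h z * Real.log (h z)) - Exp p h * Real.log (Exp p h)
      ≤ ∑ i : Fin n, Exp p (fun z => h z * Real.log (h z / Ei p i h z)) := by
  have := tens hp0 hp1 (List.finRange n) (List.nodup_finRange n) h hh (fun _ => false)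
  rw [ESl_full hp1, ESl_full hp1] at this
  have hmap : ((List.finRange n).map (fun i =>
      ESl p (List.finRange n) (fun z => h z * Real.log (h z / Ei p i h z))
        (fun _ => false))).sum
      = ∑ i : Fin n, Exp p (fun z => h z * Real.log (h z / Ei p i h z)) := by
    rw [Fin.sum_univ_def]
    congr 1
    exact List.map_congr_left fun i _ => ESl_full hp1 _ _
  rwa [hmap] at this

/-- tensorization of variance -/
lemma vtens (hp0 : ∀ i b, 0 ≤ p i b) (hp1 : ∀ i, p i false + p i true = 1)
    (l : List (Fin n)) (h : C n → ℝ) (u : Fin n → C n → ℝ) (hu : ∀ i, Inv i (u i))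
    (y : C n) :
    ESl p l (fun z => h z ^ 2) y - (ESl p l h y) ^ 2
      ≤ (l.map (fun i => ESl p l (fun z => (h z - u i z) ^ 2) y)).sum := by
  induction l generalizing y with
  | nil => simp [ESl]
  | cons i l ih =>
    set M : C n → ℝ := ESl p l h with hM
    set K : C n → ℝ := ESl p l (fun z => h z ^ 2) with hK
    set w : C n → ℝ := ESl p l (u i) with hw
    have hwinv : Inv i w := Inv_ESl i l (hu i)
    have hstep2 : Ei p i (fun x => M x ^ 2) y - (Ei p i M y) ^ 2
        ≤ ESl p (i :: l) (fun z => (h z - u i z) ^ 2) y := by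
      have h2pt : Ei p i (fun x => M x ^ 2) y - (Ei p i M y) ^ 2
          ≤ Ei p i (fun x => (M x - w x) ^ 2) y := by
        have hq2 : (p i false + p i true) * (w y) ^ 2 = (w y) ^ 2 := by
          rw [hp1 i, one_mul]
        simp only [Ei, hwinv y false, hwinv y true]
        nlinarith [sq_nonneg (w y - (p i false * M (Function.update y i false)
          + p i true * M (Function.update y i true))), hq2]
      have hMw : (fun x => (M x - w x) ^ 2)
          = fun x => (ESl p l (fun z => h z - u i z) x) ^ 2 := by
        funext x; rw [ESl_sub]
      have hJ : ∀ x, (ESl p l (fun z => h z - u i z) x) ^ 2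
          ≤ ESl p l (fun z => (h z - u i z) ^ 2) x :=
        fun x => ESl_sq hp0 hp1 l _ x
      have := Ei_mono (i := i) hp0 hJ y
      rw [hMw] at h2pt
      exact le_trans h2pt this
    have hstep1 : Ei p i (fun z => K z - M z ^ 2) y
        ≤ (l.map (fun j => ESl p (i :: l) (fun z => (h z - u j z) ^ 2) y)).sum := by
      have hmono := Ei_mono (i := i) hp0 (fun x => ih x) y
      rwa [Ei_map_sum] at hmono
    have hsplit : ESl p (i :: l) (fun z => h z ^ 2) y - (ESl p (i :: l) h y) ^ 2
        = Ei p i (fun z => K z - M z ^ 2) y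
          + (Ei p i (fun x => M x ^ 2) y - (Ei p i M y) ^ 2) := by
      rw [Ei_sub]; simp only [ESl]; ring
    rw [hsplit]
    simp only [List.map_cons, List.sum_cons]
    linarith [hstep1, hstep2]

/-- variance bound, `Exp` form -/
lemma variance_tens (hp0 : ∀ i b, 0 ≤ p i b) (hp1 : ∀ i, p i false + p i true = 1)
    (h : C n → ℝ) (u : Fin n → C n → ℝ) (hu : ∀ i, Inv i (u i)) :
    Exp p (fun z => h z ^ 2) - (Exp p h) ^ 2
      ≤ ∑ i : Fin n, Exp p (fun z => (h z - u i z) ^ 2) := by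
  have := vtens hp0 hp1 (List.finRange n) h u hu (fun _ => false)
  rw [ESl_full hp1, ESl_full hp1] at this
  have hmap : ((List.finRange n).map (fun i =>
      ESl p (List.finRange n) (fun z => (h z - u i z) ^ 2) (fun _ => false))).sum
      = ∑ i : Fin n, Exp p (fun z => (h z - u i z) ^ 2) := by
    rw [Fin.sum_univ_def]
    congr 1
    exact List.map_congr_left fun i _ => ESl_full hp1 _ _
  rwa [hmap] at this

end tens
end SBaux

namespace SBaux
variable {n : ℕ} {p : Fin n → Bool → ℝ}

section di

lemma Exp_linear (c1 c2 : ℝ) (k1 k2 : C n → ℝ) :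
    Exp p (fun z => c1 * k1 z + c2 * k2 z) = c1 * Exp p k1 + c2 * Exp p k2 := by
  simp only [Exp, Finset.mul_sum, ← Finset.sum_add_distrib]
  exact Finset.sum_congr rfl fun y _ => by ring

lemma Exp_smul (c : ℝ) (k : C n → ℝ) :
    Exp p (fun z => c * k z) = c * Exp p k := by
  simp only [Exp, Finset.mul_sum]
  exact Finset.sum_congr rfl fun y _ => by ring

lemma Exp_finsum (k : Fin n → C n → ℝ) :
    ∑ i : Fin n, Exp p (k i) = Exp p (fun z => ∑ i : Fin n, k i z) := by
  simp only [Exp, Finset.mul_sum]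
  exact Finset.sum_comm

/-- convexity scaling for `φ(u) = eᵘ - u - 1` -/
lemma phi_scale {u c : ℝ} (hu : 0 ≤ u) (hc : 0 ≤ c) (hc1 : c ≤ 1) :
    Real.exp (c * u) - c * u - 1 ≤ c * (Real.exp u - u - 1) := by
  have h := convexOn_exp.2 (Set.mem_univ u) (Set.mem_univ (0:ℝ)) hc
    (sub_nonneg.2 hc1) (by ring)
  simp only [smul_eq_mul, mul_zero, add_zero, Real.exp_zero, mul_one] at h
  linarith

lemma phi_nonneg (u : ℝ) : 0 ≤ Real.exp u - u - 1 := by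
  have := Real.add_one_le_exp u
  linarith

lemma phi_pos {u : ℝ} (hu : 0 < u) : 0 < Real.exp u - u - 1 := by
  have := Real.add_one_lt_exp hu.ne'
  linarith

variable (f : C n → ℝ) {g : Fin n → C n → ℝ} {a b : ℝ}

/-- the key per-coordinate entropy bound -/
lemma percoord (hp0 : ∀ i b, 0 ≤ p i b) (hp1 : ∀ i, p i false + p i true = 1)
    (hg : ∀ i, Inv i (g i)) (l : ℝ) (i : Fin n) :
    Exp p (fun z => Real.exp (l * f z) *
        Real.log (Real.exp (l * f z) / Ei p i (fun y => Real.exp (l * f y)) z))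
      ≤ Exp p (fun z => Real.exp (l * f z) *
        (Real.exp (-(l * (f z - g i z))) - (-(l * (f z - g i z))) - 1)) := by
  set h : C n → ℝ := fun y => Real.exp (l * f y) with hh
  have hhpos : ∀ y, 0 < h y := fun y => Real.exp_pos _
  have hkey : ∀ y, Ei p i (fun z => h z * Real.log (h z / Ei p i h z)) y
      ≤ Ei p i (fun z => h z *
        (Real.exp (-(l * (f z - g i z))) - (-(l * (f z - g i z))) - 1)) y := by
    intro y
    set Mv := Ei p i h y with hMv
    have hMpos : 0 < Mv := Ei_pos hp0 hp1 hhpos y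
    set u : ℝ := Real.exp (l * g i y) with hu
    have hupos : 0 < u := Real.exp_pos _
    have hgy : ∀ bb, g i (Function.update y i bb) = g i y := fun bb => hg i y bb
    have hMinv : ∀ bb, Ei p i h (Function.update y i bb) = Mv :=
      fun bb => Inv_Ei_self i h y bb
    have hEiexpand : ∀ F : C n → ℝ, Ei p i F y
        = p i false * F (Function.update y i false)
          + p i true * F (Function.update y i true) := fun F => rfl
    -- expand both sides
    have hLHS : Ei p i (fun z => h z * Real.log (h z / Ei p i h z)) y
        = p i false * (h (Function.update y i false) * (l * f (Function.update y i false)))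
          + p i true * (h (Function.update y i true) * (l * f (Function.update y i true)))
          - Mv * Real.log Mv := by
      rw [hEiexpand]
      rw [hMinv false, hMinv true]
      rw [Real.log_div (hhpos _).ne' hMpos.ne', Real.log_div (hhpos _).ne' hMpos.ne']
      have hle : ∀ bb, Real.log (h (Function.update y i bb))
          = l * f (Function.update y i bb) := by
        intro bb; rw [hh]; exact Real.log_exp _
      rw [hle false, hle true]
      have hMv' : Mv = p i false * h (Function.update y i false)
          + p i true * h (Function.update y i true) := hEiexpand h
      rw [hMv']; ring
    have hterm : ∀ bb, h (Function.update y i bb) *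
        (Real.exp (-(l * (f (Function.update y i bb) - g i (Function.update y i bb))))
          - (-(l * (f (Function.update y i bb) - g i (Function.update y i bb)))) - 1)
        = u - h (Function.update y i bb) * (l * g i y)
          + h (Function.update y i bb) * (l * f (Function.update y i bb))
          - h (Function.update y i bb) := by
      intro bb
      rw [hgy bb]
      have hexp : h (Function.update y i bb) *
          Real.exp (-(l * (f (Function.update y i bb) - g i y))) = u := by
        rw [hh, ← Real.exp_add, hu]
        congr 1
        ring
      calc h (Function.update y i bb) *
          (Real.exp (-(l * (f (Function.update y i bb) - g i y)))
            - (-(l * (f (Function.update y i bb) - g i y))) - 1)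
          = h (Function.update y i bb) * Real.exp (-(l * (f (Function.update y i bb) - g i y)))
            + h (Function.update y i bb) * (l * (f (Function.update y i bb) - g i y))
            - h (Function.update y i bb) := by ring
        _ = _ := by rw [hexp]; ring
    have hRHS : Ei p i (fun z => h z *
        (Real.exp (-(l * (f z - g i z))) - (-(l * (f z - g i z))) - 1)) y
        = u - Mv * (l * g i y)
          + (p i false * (h (Function.update y i false) * (l * f (Function.update y i false)))
            + p i true * (h (Function.update y i true) * (l * f (Function.update y i true))))
          - Mv := by
      rw [hEiexpand]
      rw [hterm false, hterm true]
      have hMv' : Mv = p i false * h (Function.update y i false)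
          + p i true * h (Function.update y i true) := hEiexpand h
      have hq := hp1 i
      rw [hMv']
      linear_combination u * hq
    have hlgu : l * g i y = Real.log u := (Real.log_exp _).symm
    have hlog := Real.log_le_sub_one_of_pos (div_pos hupos hMpos)
    rw [Real.log_div hupos.ne' hMpos.ne'] at hlog
    have h2 : Mv * (Real.log u - Real.log Mv) ≤ Mv * (u / Mv - 1) :=
      mul_le_mul_of_nonneg_left hlog hMpos.le
    have h3 : Mv * (u / Mv - 1) = u - Mv := by field_simp
    rw [hLHS, hRHS, hlgu]
    nlinarith [h2, h3]
  calc Exp p (fun z => h z * Real.log (h z / Ei p i h z))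
      = Exp p (Ei p i (fun z => h z * Real.log (h z / Ei p i h z))) :=
        (Exp_Ei hp1 i _).symm
    _ ≤ Exp p (Ei p i (fun z => h z *
          (Real.exp (-(l * (f z - g i z))) - (-(l * (f z - g i z))) - 1))) :=
        Exp_mono hp0 hkey
    _ = _ := Exp_Ei hp1 i _

/-- the entropy differential inequality -/
lemma DI (hp0 : ∀ i b, 0 ≤ p i b) (hp1 : ∀ i, p i false + p i true = 1)
    (hg : ∀ i, Inv i (g i)) (hfg : ∀ x i, 0 ≤ f x - g i x ∧ f x - g i x ≤ 1)
    (hsum : ∀ x, ∑ i, (f x - g i x) ≤ a * f x + b) {l : ℝ} (hl : l ≤ 0) :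
    l * Exp p (fun y => f y * Real.exp (l * f y))
      - Exp p (fun y => Real.exp (l * f y)) *
          Real.log (Exp p (fun y => Real.exp (l * f y)))
    ≤ (Real.exp (-l) - (-l) - 1) *
        (a * Exp p (fun y => f y * Real.exp (l * f y))
          + b * Exp p (fun y => Real.exp (l * f y))) := by
  set h : C n → ℝ := fun y => Real.exp (l * f y) with hh
  have hhpos : ∀ y, 0 < h y := fun y => Real.exp_pos _
  set ph : ℝ := Real.exp (-l) - (-l) - 1 with hph
  have hphnn : 0 ≤ ph := phi_nonneg (-l)
  have e1 : Exp p (fun z => h z * Real.log (h z)) = l * Exp p (fun y => f y * h y) := by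
    have : (fun z => h z * Real.log (h z)) = fun z => l * (f z * h z) := by
      funext z; rw [hh]; simp only []; rw [Real.log_exp]; ring
    rw [this, Exp_smul]
  have step3 : ∀ i : Fin n, ∀ z, h z *
      (Real.exp (-(l * (f z - g i z))) - (-(l * (f z - g i z))) - 1)
      ≤ (f z - g i z) * (ph * h z) := by
    intro i z
    have hc := hfg z i
    have hscale := phi_scale (u := -l) (c := f z - g i z) (by linarith) hc.1 hc.2
    have harg : -(l * (f z - g i z)) = (f z - g i z) * (-l) := by ring
    rw [harg]
    have := mul_le_mul_of_nonneg_left hscale (hhpos z).le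
    calc h z * (Real.exp ((f z - g i z) * (-l)) - (f z - g i z) * (-l) - 1)
        ≤ h z * ((f z - g i z) * (Real.exp (-l) - (-l) - 1)) := this
      _ = (f z - g i z) * (ph * h z) := by rw [hph]; ring
  calc l * Exp p (fun y => f y * Real.exp (l * f y))
        - Exp p (fun y => Real.exp (l * f y)) *
            Real.log (Exp p (fun y => Real.exp (l * f y)))
      = Exp p (fun z => h z * Real.log (h z)) - Exp p h * Real.log (Exp p h) := by
        rw [e1]
    _ ≤ ∑ i : Fin n, Exp p (fun z => h z * Real.log (h z / Ei p i h z)) :=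
        entropy_tens hp0 hp1 h hhpos
    _ ≤ ∑ i : Fin n, Exp p (fun z => h z *
          (Real.exp (-(l * (f z - g i z))) - (-(l * (f z - g i z))) - 1)) :=
        Finset.sum_le_sum fun i _ => percoord f hp0 hp1 hg l i
    _ ≤ ∑ i : Fin n, Exp p (fun z => (f z - g i z) * (ph * h z)) :=
        Finset.sum_le_sum fun i _ => Exp_mono hp0 (step3 i)
    _ = Exp p (fun z => ∑ i : Fin n, (f z - g i z) * (ph * h z)) := Exp_finsum _
    _ ≤ Exp p (fun z => (a * f z + b) * (ph * h z)) := by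
        refine Exp_mono hp0 fun z => ?_
        rw [← Finset.sum_mul]
        exact mul_le_mul_of_nonneg_right (hsum z)
          (mul_nonneg hphnn (hhpos z).le)
    _ = ph * (a * Exp p (fun y => f y * Real.exp (l * f y))
          + b * Exp p (fun y => Real.exp (l * f y))) := by
        have : (fun z => (a * f z + b) * (ph * h z))
            = fun z => (ph * a) * (f z * h z) + (ph * b) * h z := by
          funext z; ring
        rw [this, Exp_linear]
        rw [hh]
        ring

/-- the variance bound -/
lemma var_le (hp0 : ∀ i b, 0 ≤ p i b) (hp1 : ∀ i, p i false + p i true = 1)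
    (hg : ∀ i, Inv i (g i)) (hfg : ∀ x i, 0 ≤ f x - g i x ∧ f x - g i x ≤ 1)
    (hsum : ∀ x, ∑ i, (f x - g i x) ≤ a * f x + b) :
    Exp p (fun y => f y ^ 2) - (Exp p f) ^ 2 ≤ a * Exp p f + b := by
  calc Exp p (fun y => f y ^ 2) - (Exp p f) ^ 2
      ≤ ∑ i : Fin n, Exp p (fun z => (f z - g i z) ^ 2) :=
        variance_tens hp0 hp1 f g hg
    _ ≤ ∑ i : Fin n, Exp p (fun z => f z - g i z) :=
        Finset.sum_le_sum fun i _ => Exp_mono hp0 fun z => by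
          nlinarith [(hfg z i).1, (hfg z i).2]
    _ = Exp p (fun z => ∑ i : Fin n, (f z - g i z)) := Exp_finsum _
    _ ≤ Exp p (fun z => a * f z + b * 1) := by
        refine Exp_mono hp0 fun z => ?_
        have := hsum z
        linarith
    _ = a * Exp p f + b := by
        rw [Exp_linear]
        have : Exp p (fun _ : C n => (1:ℝ)) = 1 := Exp_const hp1 1
        rw [this, mul_one]

end di
end SBaux

namespace SBaux
open Filter Set Topology

section analytic

/-- helper: nonnegativity from derivative -/
lemma nonneg_of_deriv {k k' : ℝ → ℝ} (h0 : k 0 = 0)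
    (hd : ∀ u, HasDerivAt k (k' u) u) (hd0 : ∀ u, 0 ≤ u → 0 ≤ k' u) :
    ∀ u, 0 ≤ u → 0 ≤ k u := by
  intro u hu
  have hmono : MonotoneOn k (Set.Ici 0) := by
    refine monotoneOn_of_deriv_nonneg (convex_Ici 0)
      (fun x _ => (hd x).continuousAt.continuousWithinAt)
      (fun x hx => (hd x).differentiableAt.differentiableWithinAt) ?_
    intro x hx
    rw [interior_Ici] at hx
    rw [(hd x).deriv]
    exact hd0 x (le_of_lt hx)
  have := hmono (Set.self_mem_Ici) (Set.mem_Ici.2 hu) hu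
  rwa [h0] at this

lemma chi_nonneg : ∀ u, 0 ≤ u → 0 ≤ (u - 2) * Real.exp u + u + 2 := by
  refine nonneg_of_deriv (by norm_num) (k' := fun u => (u - 1) * Real.exp u + 1) ?_ ?_
  · intro u
    have h1 : HasDerivAt (fun y : ℝ => (y - 2) * Real.exp y)
        (1 * Real.exp u + (u - 2) * Real.exp u) u :=
      ((hasDerivAt_id u).sub_const 2).mul (Real.hasDerivAt_exp u)
    have h2 : HasDerivAt (fun y : ℝ => (y - 2) * Real.exp y + y + 2)
        (1 * Real.exp u + (u - 2) * Real.exp u + 1) u :=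
      (h1.add (hasDerivAt_id u)).add_const 2
    show HasDerivAt _ ((u - 1) * Real.exp u + 1) u
    convert h2 using 1
    ring
  · intro u hu
    show (0:ℝ) ≤ (u - 1) * Real.exp u + 1
    rcases le_or_gt 1 u with h | h
    · have := Real.exp_pos u
      nlinarith
    · have h3 : 1 - u ≤ Real.exp (-u) := by
        have := Real.add_one_le_exp (-u)
        linarith
      have h4 : (1 - u) * Real.exp u ≤ Real.exp (-u) * Real.exp u :=
        mul_le_mul_of_nonneg_right h3 (Real.exp_pos u).le
      rw [← Real.exp_add, neg_add_cancel, Real.exp_zero] at h4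
      nlinarith

/-- key analytic inequality: `(3-u)·φ(u) ≤ 3u²/2` for `u ≥ 0` -/
lemma key_ineq : ∀ u, 0 ≤ u → (3 - u) * (Real.exp u - u - 1) ≤ 3 * u ^ 2 / 2 := by
  have H : ∀ u, 0 ≤ u → 0 ≤ 3 * u ^ 2 / 2 - (3 - u) * (Real.exp u - u - 1) := by
    refine nonneg_of_deriv (by norm_num)
      (k' := fun u => (u - 2) * Real.exp u + u + 2) ?_ chi_nonneg
    intro u
    show HasDerivAt _ ((u - 2) * Real.exp u + u + 2) u
    have h1 : HasDerivAt (fun y : ℝ => (3 - y) * (Real.exp y - y - 1))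
        ((0 - 1) * (Real.exp u - u - 1) + (3 - u) * (Real.exp u - 1)) u :=
      ((hasDerivAt_const u (3:ℝ)).sub (hasDerivAt_id u)).mul
        (((Real.hasDerivAt_exp u).sub (hasDerivAt_id u)).sub_const 1)
    have h2 : HasDerivAt (fun y : ℝ => 3 * y ^ 2 / 2)
        (3 * (2 * u) / 2) u := by
      have := (hasDerivAt_pow 2 u).const_mul (3 : ℝ)
      have h3 := this.div_const (2 : ℝ)
      simpa using h3
    have h4 := h2.sub h1
    refine h4.congr_deriv ?_
    ring
  intro u hu
  have := H u hu
  linarith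

lemma key_ineq' {a u : ℝ} (ha : 1 / 3 ≤ a) (hu : 0 ≤ u) :
    (Real.exp u - u - 1) * (1 - a * u) ≤ u ^ 2 / 2 := by
  have hphi := phi_nonneg u
  have h1 : 1 - a * u ≤ 1 - u / 3 := by nlinarith
  have h2 : (Real.exp u - u - 1) * (1 - a * u) ≤ (Real.exp u - u - 1) * (1 - u / 3) :=
    mul_le_mul_of_nonneg_left h1 hphi
  have h3 := key_ineq u hu
  nlinarith

end analytic
end SBaux

namespace SBaux
open Filter Set Topology

set_option maxHeartbeats 1600000 in
theorem comb_main {n : ℕ} {p : Fin n → Bool → ℝ}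
    (hp0 : ∀ i b, 0 ≤ p i b) (hp1 : ∀ i, p i false + p i true = 1)
    (f : C n → ℝ) {g : Fin n → C n → ℝ} {a b : ℝ}
    (hg : ∀ i, Inv i (g i))
    (hfg : ∀ x i, 0 ≤ f x - g i x ∧ f x - g i x ≤ 1)
    (hsum : ∀ x, ∑ i, (f x - g i x) ≤ a * f x + b)
    (ha : 1 / 3 ≤ a) (hb : 0 ≤ b)
    {t : ℝ} (ht : 0 < t) (ht' : t ≤ Exp p f) :
    ∑ y ∈ Finset.univ.filter (fun y => f y ≤ Exp p f - t), W p y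
      ≤ Real.exp (-(t ^ 2) / (2 * (a * Exp p f + b))) := by
  set m : ℝ := Exp p f with hm_def
  have hm : 0 < m := lt_of_lt_of_le ht ht'
  set v : ℝ := a * m + b with hv_def
  have hv : 0 < v := by
    have ha' : (0:ℝ) < a := lt_of_lt_of_le (by norm_num) ha
    have h1 := mul_pos ha' hm
    rw [hv_def]
    linarith only [h1, hb]
  set L0 : ℝ := -t / v with hL0_def
  have hL0neg : L0 < 0 := by
    rw [hL0_def]
    exact div_neg_of_neg_of_pos (by linarith) hv
  set F : ℝ → ℝ := fun l => Exp p (fun y => Real.exp (l * f y)) with hF_def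
  set Am : ℝ → ℝ := fun l => Exp p (fun y => f y * Real.exp (l * f y)) with hAm_def
  set B2 : ℝ → ℝ := fun l => Exp p (fun y => f y ^ 2 * Real.exp (l * f y)) with hB2_def
  have hFd : ∀ l, HasDerivAt F (Am l) l := by
    intro l
    have hterm : ∀ y : C n, HasDerivAt (fun l' => W p y * Real.exp (l' * f y))
        (W p y * (Real.exp (l * f y) * f y)) l :=
      fun y => ((hasDerivAt_mul_const (f y)).exp).const_mul (W p y)
    have hsum' : HasDerivAt (fun l' => ∑ y : C n, W p y * Real.exp (l' * f y))
        (∑ y : C n, W p y * (Real.exp (l * f y) * f y)) l :=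
      HasDerivAt.fun_sum fun y _ => hterm y
    have heq : Am l = ∑ y : C n, W p y * (Real.exp (l * f y) * f y) :=
      Finset.sum_congr rfl fun y _ => by ring
    rw [heq]
    exact hsum'
  have hAd : ∀ l, HasDerivAt Am (B2 l) l := by
    intro l
    have hterm : ∀ y : C n, HasDerivAt (fun l' => W p y * (f y * Real.exp (l' * f y)))
        (W p y * (f y * (Real.exp (l * f y) * f y))) l :=
      fun y => (((hasDerivAt_mul_const (f y)).exp).const_mul (f y)).const_mul (W p y)
    have hsum' : HasDerivAt (fun l' => ∑ y : C n, W p y * (f y * Real.exp (l' * f y)))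
        (∑ y : C n, W p y * (f y * (Real.exp (l * f y) * f y))) l :=
      HasDerivAt.fun_sum fun y _ => hterm y
    have heq : B2 l = ∑ y : C n, W p y * (f y * (Real.exp (l * f y) * f y)) :=
      Finset.sum_congr rfl fun y _ => by ring
    rw [heq]
    exact hsum'
  have hFpos : ∀ l, 0 < F l := by
    intro l
    have hne : (Finset.univ : Finset (C n)).Nonempty := Finset.univ_nonempty
    have hc0pos : 0 < Finset.univ.inf' hne (fun y => Real.exp (l * f y)) := by
      rw [Finset.lt_inf'_iff]
      exact fun y _ => Real.exp_pos _
    have hle : Exp p (fun _ : C n => Finset.univ.inf' hne (fun y => Real.exp (l * f y)))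
        ≤ Exp p (fun y => Real.exp (l * f y)) :=
      Exp_mono hp0 fun y => Finset.inf'_le _ (Finset.mem_univ y)
    rw [Exp_const hp1] at hle
    exact lt_of_lt_of_le hc0pos hle
  have hF0 : F 0 = 1 := by
    have : (fun y : C n => Real.exp (0 * f y)) = fun _ : C n => (1:ℝ) := by
      funext y; simp
    rw [hF_def]; simp only [this]; exact Exp_const hp1 1
  have hAm0 : Am 0 = m := by
    have : (fun y : C n => f y * Real.exp (0 * f y)) = f := by
      funext y; simp
    rw [hAm_def]; simp only [this]; rfl
  have hB20 : B2 0 = Exp p (fun y => f y ^ 2) := by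
    have : (fun y : C n => f y ^ 2 * Real.exp (0 * f y)) = fun y => f y ^ 2 := by
      funext y; simp
    rw [hB2_def]; simp only [this]
  set D : ℝ → ℝ := fun l => Real.log (F l) - l * m with hD_def
  set Dp : ℝ → ℝ := fun l => Am l / F l - m with hDp_def
  set Q : ℝ → ℝ := fun l => (B2 l * F l - Am l * Am l) / F l ^ 2 with hQ_def
  have hDd : ∀ l, HasDerivAt D (Dp l) l :=
    fun l => ((hFd l).log (hFpos l).ne').sub (hasDerivAt_mul_const m)
  have hDpd : ∀ l, HasDerivAt Dp (Q l) l :=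
    fun l => ((hAd l).div (hFd l) (hFpos l).ne').sub_const m
  have hFc : Continuous F := continuous_iff_continuousAt.2 fun x => (hFd x).continuousAt
  have hAmc : Continuous Am := continuous_iff_continuousAt.2 fun x => (hAd x).continuousAt
  have hB2c : Continuous B2 := by
    rw [hB2_def]
    show Continuous fun l => ∑ y : C n, W p y * (f y ^ 2 * Real.exp (l * f y))
    refine continuous_finset_sum _ fun y _ => ?_
    fun_prop
  have hQc : Continuous Q := by
    rw [hQ_def]
    exact ((hB2c.mul hFc).sub (hAmc.mul hAmc)).div (hFc.pow 2)
      (fun x => pow_ne_zero _ (hFpos x).ne')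
  have hD0 : D 0 = 0 := by rw [hD_def]; simp [hF0]
  have hDp0 : Dp 0 = 0 := by rw [hDp_def]; simp [hF0, hAm0]
  have hQ0 : Q 0 ≤ v := by
    have hvar := var_le f hp0 hp1 hg hfg hsum
    rw [hQ_def]
    simp only [hF0, hB20, hAm0]
    rw [hv_def, hm_def]
    norm_num
    have hsq : Exp p f * Exp p f = (Exp p f) ^ 2 := by ring
    linarith only [hvar, hsq]
  have hFsum : ∀ l, F l = ∑ y : C n, W p y * Real.exp (l * f y) := fun _ => rfl
  clear_value Q Dp D B2 Am F L0 v m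
  -- main epsilon step
  have hmain : ∀ ε : ℝ, 0 < ε → D L0 ≤ (v + ε) * L0 ^ 2 / 2 := by
    intro ε hε
    set c : ℝ := v + ε with hc
    have hcpos : 0 < c := by rw [hc]; linarith
    set R : ℝ → ℝ := fun l => c * l ^ 2 / 2 - D l with hR_def
    set Rp : ℝ → ℝ := fun l => c * l - Dp l with hRp_def
    have hsqd : ∀ l : ℝ, HasDerivAt (fun y : ℝ => c * y ^ 2 / 2) (c * l) l := by
      intro l
      have h := ((hasDerivAt_pow 2 l).const_mul c).div_const 2
      refine h.congr_deriv ?_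
      rw [show (2:ℕ) - 1 = 1 from rfl]
      push_cast
      ring
    have hRd : ∀ l, HasDerivAt R (Rp l) l := fun l => (hsqd l).sub (hDd l)
    have hRpd : ∀ l, HasDerivAt Rp (c - Q l) l := by
      intro l
      have h1 : HasDerivAt (fun y : ℝ => c * y) (c * 1) l := (hasDerivAt_id l).const_mul c
      have := h1.sub (hDpd l)
      refine this.congr_deriv ?_
      ring
    clear_value c
    have hR0 : R 0 = 0 := by rw [hR_def]; simp [hD0]
    have hRp0 : Rp 0 = 0 := by rw [hRp_def]; simp [hDp0]
    clear_value R Rp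
    have hQ0c : Q 0 < c := lt_of_le_of_lt hQ0 (by rw [hc]; linarith)
    have hev : ∀ᶠ x in 𝓝 (0:ℝ), Q x < c :=
      (hQc.continuousAt).eventually_lt_const hQ0c
    obtain ⟨η, hη, hball⟩ := Metric.eventually_nhds_iff.1 hev
    set δ : ℝ := η / 2 with hδ_def
    have hδpos : 0 < δ := by rw [hδ_def]; linarith
    clear_value δ
    have hQlt : ∀ x ∈ Icc (-δ) 0, Q x < c := by
      intro x hx
      apply hball
      rw [Real.dist_eq, sub_zero, abs_lt]
      have h1 := hx.1
      have h2 := hx.2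
      have hδη : δ = η / 2 := hδ_def
      constructor <;> [linarith; linarith]
    have hRpmono : MonotoneOn Rp (Icc (-δ) 0) := by
      refine monotoneOn_of_deriv_nonneg (convex_Icc _ _)
        (fun x _ => (hRpd x).continuousAt.continuousWithinAt)
        (fun x _ => (hRpd x).differentiableAt.differentiableWithinAt) ?_
      intro x hx
      rw [interior_Icc] at hx
      rw [(hRpd x).deriv]
      have := hQlt x ⟨hx.1.le, hx.2.le⟩
      linarith
    have hRple : ∀ x ∈ Icc (-δ) 0, Rp x ≤ 0 := by
      intro x hx
      have h0mem : (0:ℝ) ∈ Icc (-δ) 0 := ⟨by linarith, le_refl _⟩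
      have := hRpmono hx h0mem hx.2
      rwa [hRp0] at this
    have hRanti : AntitoneOn R (Icc (-δ) 0) := by
      refine antitoneOn_of_deriv_nonpos (convex_Icc _ _)
        (fun x _ => (hRd x).continuousAt.continuousWithinAt)
        (fun x _ => (hRd x).differentiableAt.differentiableWithinAt) ?_
      intro x hx
      rw [interior_Icc] at hx
      rw [(hRd x).deriv]
      exact hRple x ⟨hx.1.le, hx.2.le⟩
    have hRnbhd : ∀ x ∈ Icc (-δ) 0, 0 ≤ R x := by
      intro x hx
      have h0mem : (0:ℝ) ∈ Icc (-δ) 0 := ⟨by linarith, le_refl _⟩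
      have := hRanti hx h0mem hx.2
      rwa [hR0] at this
    -- contradiction setup
    by_contra hcon
    push_neg at hcon
    have hRL0 : R L0 < 0 := by rw [hR_def]; simp only []; linarith
    set B : Set ℝ := {x : ℝ | x ∈ Icc L0 0 ∧ R x < 0} with hB_def
    have hL0mem : L0 ∈ B := ⟨⟨le_refl _, hL0neg.le⟩, hRL0⟩
    have hBne : B.Nonempty := ⟨L0, hL0mem⟩
    have hBbdd : BddAbove B := ⟨0, fun x hx => hx.1.2⟩
    set L1 : ℝ := sSup B with hL1_def
    have hmem_le : ∀ x ∈ B, x ≤ -δ := by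
      intro x hx
      by_contra h
      push_neg at h
      have hmem : x ∈ Icc (-δ) 0 := ⟨h.le, hx.1.2⟩
      have := hRnbhd x hmem
      linarith [hx.2]
    have hL1δ : L1 ≤ -δ := csSup_le hBne hmem_le
    have hL1ge : L0 ≤ L1 := le_csSup hBbdd hL0mem
    clear_value L1
    have hL1neg : L1 < 0 := lt_of_le_of_lt hL1δ (by linarith)
    have hRcont : Continuous R := continuous_iff_continuousAt.2 fun x => (hRd x).continuousAt
    have hRL1le : R L1 ≤ 0 := by
      have hcl : L1 ∈ closure B := by
        rw [hL1_def]; exact csSup_mem_closure hBne hBbdd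
      have hsub : closure B ⊆ {x | R x ≤ 0} :=
        closure_minimal (fun x hx => hx.2.le) (isClosed_le hRcont continuous_const)
      exact hsub hcl
    have hge : ∀ x, L1 < x → x ≤ 0 → 0 ≤ R x := by
      intro x h1 h2
      by_contra h3
      push_neg at h3
      have hxB : x ∈ B := ⟨⟨le_trans hL1ge h1.le, h2⟩, h3⟩
      have := le_csSup hBbdd hxB
      linarith
    have hRL1 : R L1 = 0 := by
      by_contra h
      have hlt : R L1 < 0 := lt_of_le_of_ne hRL1le h
      have hev2 : ∀ᶠ x in 𝓝 L1, R x < 0 :=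
        (hRcont.continuousAt).eventually_lt_const hlt
      obtain ⟨η2, hη2, hb2⟩ := Metric.eventually_nhds_iff.1 hev2
      set x : ℝ := L1 + min η2 (-L1) / 2 with hx_def
      have hminpos : 0 < min η2 (-L1) := lt_min hη2 (by linarith)
      have hx1 : L1 < x := by rw [hx_def]; linarith
      have hx2 : x ≤ 0 := by
        rw [hx_def]
        have := min_le_right η2 (-L1)
        linarith
      have hdist : dist x L1 < η2 := by
        rw [Real.dist_eq, hx_def]
        have h1 := min_le_left η2 (-L1)
        rw [abs_lt]
        constructor <;> [linarith; linarith]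
      have := hb2 hdist
      have := hge x hx1 hx2
      linarith
    have hslope : 0 ≤ Rp L1 := by
      have htend : Tendsto (slope R L1) (𝓝[>] L1) (𝓝 (Rp L1)) :=
        (hasDerivAt_iff_tendsto_slope.1 (hRd L1)).mono_left
          (nhdsWithin_mono _ (fun x hx => hx.ne'))
      refine ge_of_tendsto htend ?_
      filter_upwards [Ioc_mem_nhdsGT hL1neg] with x hx
      rw [slope_def_field]
      apply div_nonneg
      · have := hge x hx.1 hx.2
        rw [hRL1]
        linarith
      · linarith [hx.1]
    -- apply the differential inequality at L1
    have hDIl := DI f hp0 hp1 hg hfg hsum (l := L1) hL1neg.le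
    have hFl := hFpos L1
    set ph : ℝ := Real.exp (-L1) - (-L1) - 1 with hph_def
    have hDId : L1 * Dp L1 - D L1 ≤ ph * (a * Dp L1 + v) := by
      have e3 : F L1 * (L1 * Dp L1 - D L1)
          = L1 * Am L1 - F L1 * Real.log (F L1) := by
        rw [hDp_def, hD_def]
        field_simp
        ring
      have e4 : F L1 * (ph * (a * Dp L1 + v))
          = ph * (a * Am L1 + b * F L1) := by
        rw [hDp_def, hv_def]
        field_simp
        ring_nf
      have h5 : F L1 * (L1 * Dp L1 - D L1) ≤ F L1 * (ph * (a * Dp L1 + v)) := by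
        rw [e3, e4, hF_def, hAm_def]
        exact hDIl
      exact le_of_mul_le_mul_left h5 hFl
    have hD1 : D L1 = c * L1 ^ 2 / 2 := by
      have : R L1 = 0 := hRL1
      rw [hR_def] at this
      simp only [] at this
      linarith
    have hDp1 : Dp L1 ≤ c * L1 := by
      rw [hRp_def] at hslope
      simp only [] at hslope
      linarith
    have hLHS : c * L1 ^ 2 / 2 ≤ L1 * Dp L1 - D L1 := by
      have h7 : 0 ≤ (-L1) * (c * L1 - Dp L1) :=
        mul_nonneg (neg_nonneg.2 hL1neg.le) (sub_nonneg.2 hDp1)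
      have h8 : (-L1) * (c * L1 - Dp L1) = -(L1 * (c * L1)) + L1 * Dp L1 := by ring
      have h9 : L1 * (c * L1) = c * L1 ^ 2 := by ring
      linarith only [h7, hD1, h8, h9]
    have hphpos : 0 < ph := phi_pos (neg_pos.2 hL1neg)
    clear_value ph
    have hL1sq : 0 < L1 ^ 2 := by
      have h1 := mul_pos (neg_pos.2 hL1neg) (neg_pos.2 hL1neg)
      have h2 : (-L1) * (-L1) = L1 ^ 2 := by ring
      linarith only [h1, h2]
    set u : ℝ := -L1 with hu_def
    have hupos : 0 < u := neg_pos.2 hL1neg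
    clear_value u
    rcases le_or_gt (a * Dp L1 + v) 0 with hs | hs
    · have h6 : ph * (a * Dp L1 + v) ≤ 0 :=
        mul_nonpos_of_nonneg_of_nonpos hphpos.le hs
      have h7 := mul_pos hcpos hL1sq
      linarith only [hLHS, hDId, h6, h7]
    · have hs2 : a * Dp L1 + v ≤ v - a * c * u := by
        have h7 : a * Dp L1 ≤ a * (c * L1) :=
          mul_le_mul_of_nonneg_left hDp1 (by linarith : (0:ℝ) ≤ a)
        rw [hu_def]
        have h8 : a * (c * L1) = -(a * c * -L1) := by ring
        linarith only [h7, h8]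
      have h9 : v - a * c * u = c * (1 - a * u) - ε := by rw [hc]; ring
      rcases le_or_gt (1 - a * u) 0 with h8 | h8
      · have h10 : c * (1 - a * u) ≤ 0 := mul_nonpos_of_nonneg_of_nonpos hcpos.le h8
        linarith only [hs, hs2, h9, h10, hε]
      · have hk := key_ineq' ha hupos.le
        have hphu : ph = Real.exp u - u - 1 := by rw [hph_def, hu_def]
        have h11 : ph * (a * Dp L1 + v) ≤ ph * (v - a * c * u) :=
          mul_le_mul_of_nonneg_left hs2 hphpos.le
        have h12 : ph * (c * (1 - a * u)) ≤ c * (u ^ 2 / 2) := by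
          have h12a : ph * (1 - a * u) ≤ u ^ 2 / 2 := by rw [hphu]; exact hk
          calc ph * (c * (1 - a * u)) = c * (ph * (1 - a * u)) := by ring
            _ ≤ c * (u ^ 2 / 2) := mul_le_mul_of_nonneg_left h12a hcpos.le
        have h13 : c * L1 ^ 2 / 2 = c * (u ^ 2 / 2) := by rw [hu_def]; ring
        have h14 : ph * (v - a * c * u) = ph * (c * (1 - a * u)) - ε * ph := by
          rw [h9]; ring
        have hεph : 0 < ε * ph := mul_pos hε hphpos
        linarith only [hDId, hLHS, h11, h12, h13, h14, hεph]
  -- pass to the limit ε → 0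
  have hDL0 : D L0 ≤ v * L0 ^ 2 / 2 := by
    by_contra h
    push_neg at h
    have hL0sq : 0 < L0 ^ 2 := by
      have h1 := mul_pos (neg_pos.2 hL0neg) (neg_pos.2 hL0neg)
      have h2 : (-L0) * (-L0) = L0 ^ 2 := by ring
      linarith only [h1, h2]
    set ε : ℝ := (D L0 - v * L0 ^ 2 / 2) / L0 ^ 2 with hε_def
    have hεpos : 0 < ε := div_pos (by linarith) hL0sq
    clear_value ε
    have := hmain ε hεpos
    rw [hε_def] at this
    have hexp : (v + (D L0 - v * L0 ^ 2 / 2) / L0 ^ 2) * L0 ^ 2 / 2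
        = v * L0 ^ 2 / 2 + (D L0 - v * L0 ^ 2 / 2) / 2 := by
      field_simp [hL0neg.ne]
    rw [hexp] at this
    linarith
  -- Chernoff
  have hFL0 : F L0 ≤ Real.exp (L0 * m + v * L0 ^ 2 / 2) := by
    have hlog : Real.log (F L0) ≤ L0 * m + v * L0 ^ 2 / 2 := by
      rw [hD_def] at hDL0
      simp only [] at hDL0
      linarith
    have := Real.exp_le_exp.2 hlog
    rwa [Real.exp_log (hFpos L0)] at this
  have hcher : (∑ y ∈ Finset.univ.filter (fun y => f y ≤ m - t), W p y)
      * Real.exp (L0 * (m - t)) ≤ F L0 := by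
    rw [Finset.sum_mul]
    calc ∑ y ∈ Finset.univ.filter (fun y => f y ≤ m - t), W p y * Real.exp (L0 * (m - t))
        ≤ ∑ y ∈ Finset.univ.filter (fun y => f y ≤ m - t), W p y * Real.exp (L0 * f y) := by
          refine Finset.sum_le_sum fun y hy => ?_
          refine mul_le_mul_of_nonneg_left ?_ (W_nonneg hp0 y)
          refine Real.exp_le_exp.2 ?_
          have hyf : f y ≤ m - t := (Finset.mem_filter.1 hy).2
          exact mul_le_mul_of_nonpos_left hyf hL0neg.le
      _ ≤ ∑ y : C n, W p y * Real.exp (L0 * f y) :=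
          Finset.sum_le_sum_of_subset_of_nonneg (Finset.filter_subset _ _)
            (fun y _ _ => mul_nonneg (W_nonneg hp0 y) (Real.exp_pos _).le)
      _ = F L0 := (hFsum L0).symm
  have harg : L0 * m + v * L0 ^ 2 / 2 - L0 * (m - t) = -(t ^ 2) / (2 * v) := by
    rw [hL0_def]
    field_simp [hv.ne']
    ring
  have hfinal : ∑ y ∈ Finset.univ.filter (fun y => f y ≤ m - t), W p y
      ≤ Real.exp (-(t ^ 2) / (2 * v)) := by
    have hepos : (0:ℝ) < Real.exp (L0 * (m - t)) := Real.exp_pos _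
    rw [← harg, Real.exp_sub, le_div_iff₀ hepos]
    exact le_trans hcher hFL0
  exact hfinal

end SBaux

open MeasureTheory ProbabilityTheory Finset


/-- For `a, b ≥ 0`, a function `f : {0,1}ⁿ → ℝ` is `(a,b)`-self-bounding if there
are functions `g i` not depending on the `i`-th coordinate such that
`0 ≤ f(x) − g i x ≤ 1` for all `x, i` and `∑ᵢ (f(x) − g i x) ≤ a f(x) + b`. -/
def ABSelfBounding {n : ℕ} (a b : ℝ) (f : (Fin n → Bool) → ℝ) : Prop :=
  0 ≤ a ∧ 0 ≤ b ∧
  ∃ g : Fin n → (Fin n → Bool) → ℝ,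
    (∀ (i : Fin n) (x : Fin n → Bool) (b' : Bool),
      g i (Function.update x i b') = g i x) ∧
    (∀ (x : Fin n → Bool) (i : Fin n), 0 ≤ f x - g i x ∧ f x - g i x ≤ 1) ∧
    (∀ x : Fin n → Bool, ∑ i, (f x - g i x) ≤ a * f x + b)

/-- Lower tail for `(a,b)`-self-bounding functions of independent `{0,1}`-valued
random variables with `a ≥ 1/3`:
`Pr[Z ≤ E Z − t] ≤ e^{−t²/(2(a E Z + b))}` for every `0 < t ≤ E Z`. -/
theorem ab_self_bounding_lower_tail
    {Ω : Type*} [MeasurableSpace Ω] (μ : Measure Ω) [IsProbabilityMeasure μ]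
    {n : ℕ} (X : Fin n → Ω → Bool) (hXm : ∀ i, Measurable (X i))
    (hXind : iIndepFun X μ)
    (f : (Fin n → Bool) → ℝ) (a b : ℝ) (hf : ABSelfBounding a b f)
    (ha : 1 / 3 ≤ a)
    (Z : Ω → ℝ) (hZ : ∀ ω, Z ω = f (fun i => X i ω)) (t : ℝ)
    (ht : 0 < t) (ht' : t ≤ ∫ ω', Z ω' ∂μ) :
    (μ {ω | Z ω ≤ (∫ ω', Z ω' ∂μ) - t}).toReal
      ≤ Real.exp (-(t ^ 2) / (2 * (a * (∫ ω', Z ω' ∂μ) + b))) := by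
  classical
  obtain ⟨ha0, hb0, g, hg, hfg, hsum⟩ := hf
  set p : Fin n → Bool → ℝ := fun i b => (μ (X i ⁻¹' {b})).toReal with hp_def
  have hp0 : ∀ i b, 0 ≤ p i b := fun i b => ENNReal.toReal_nonneg
  have hp1 : ∀ i, p i false + p i true = 1 := by
    intro i
    have hdis : Disjoint (X i ⁻¹' {false}) (X i ⁻¹' {true}) := by
      rw [Set.disjoint_left]
      intro ω h1 h2
      simp only [Set.mem_preimage, Set.mem_singleton_iff] at h1 h2
      rw [h1] at h2
      exact Bool.false_ne_true h2
    have huni : X i ⁻¹' {false} ∪ X i ⁻¹' {true} = Set.univ := by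
      ext ω
      simp only [Set.mem_union, Set.mem_preimage, Set.mem_singleton_iff, Set.mem_univ,
        iff_true]
      cases h : X i ω
      · exact Or.inl rfl
      · exact Or.inr rfl
    have hmu := measure_union (μ := μ) hdis (hXm i (measurableSet_singleton true))
    rw [huni, measure_univ] at hmu
    rw [hp_def]
    simp only []
    rw [← ENNReal.toReal_add (measure_ne_top μ _) (measure_ne_top μ _), ← hmu]
    simp
  set SB : SBaux.C n → Set Ω := fun y => ⋂ i, X i ⁻¹' {y i} with hSB_def
  have hSBm : ∀ y, MeasurableSet (SB y) :=
    fun y => MeasurableSet.iInter fun i => hXm i (measurableSet_singleton _)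
  have hSBprod : ∀ y, (μ (SB y)).toReal = SBaux.W p y := by
    intro y
    have hind := hXind.measure_inter_preimage_eq_mul (S := Finset.univ)
      (sets := fun i => {y i}) (fun i _ => measurableSet_singleton _)
    have hseteq : (⋂ i ∈ Finset.univ, X i ⁻¹' {y i}) = SB y := by
      rw [hSB_def]
      simp
    rw [hseteq] at hind
    rw [hind, ENNReal.toReal_prod]
    rfl
  have hmem : ∀ ω, ω ∈ SB (fun i => X i ω) :=
    fun ω => Set.mem_iInter.2 fun i => rfl
  have hdisj : ∀ y z : SBaux.C n, y ≠ z → Disjoint (SB y) (SB z) := by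
    intro y z hne
    rw [Set.disjoint_left]
    intro ω h1 h2
    apply hne
    funext i
    have hy := Set.mem_iInter.1 h1 i
    have hz := Set.mem_iInter.1 h2 i
    simp only [Set.mem_preimage, Set.mem_singleton_iff] at hy hz
    rw [← hy, ← hz]
  have hZeq : Z = fun ω => ∑ y : SBaux.C n, Set.indicator (SB y) (fun _ => f y) ω := by
    funext ω
    rw [hZ ω]
    rw [Finset.sum_eq_single (fun i => X i ω)]
    · rw [Set.indicator_of_mem (hmem ω)]
    · intro y _ hne
      apply Set.indicator_of_notMem
      intro hmem'
      apply hne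
      funext i
      have := Set.mem_iInter.1 hmem' i
      simp only [Set.mem_preimage, Set.mem_singleton_iff] at this
      exact this.symm
    · intro h
      exact absurd (Finset.mem_univ _) h
  have hint : ∫ ω', Z ω' ∂μ = SBaux.Exp p f := by
    rw [hZeq]
    rw [integral_finset_sum _ (fun y _ => (integrable_indicator_iff (hSBm y)).2
      (integrableOn_const (measure_ne_top μ _)))]
    have : ∀ y : SBaux.C n, ∫ ω', Set.indicator (SB y) (fun _ => f y) ω' ∂μ
        = (μ (SB y)).toReal • f y := fun y => integral_indicator_const (f y) (hSBm y)
    rw [Finset.sum_congr rfl fun y _ => this y]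
    refine Finset.sum_congr rfl fun y _ => ?_
    rw [hSBprod y, smul_eq_mul]
  rw [hint] at ht' ⊢
  have hcover : {ω | Z ω ≤ SBaux.Exp p f - t}
      = ⋃ y ∈ Finset.univ.filter (fun y : SBaux.C n => f y ≤ SBaux.Exp p f - t), SB y := by
    ext ω
    simp only [Set.mem_setOf_eq, Set.mem_iUnion, Finset.mem_filter, Finset.mem_univ,
      true_and, exists_prop]
    constructor
    · intro h
      refine ⟨fun i => X i ω, ?_, hmem ω⟩
      rwa [hZ ω] at h
    · rintro ⟨y, hy, hω⟩
      have : (fun i => X i ω) = y := by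
        funext i
        have := Set.mem_iInter.1 hω i
        simpa using this
      rw [hZ ω, this]
      exact hy
  have hμeq : (μ {ω | Z ω ≤ SBaux.Exp p f - t}).toReal
      = ∑ y ∈ Finset.univ.filter (fun y : SBaux.C n => f y ≤ SBaux.Exp p f - t),
          SBaux.W p y := by
    rw [hcover, measure_biUnion_finset (fun y _ z _ hne => hdisj y z hne)
      (fun y _ => hSBm y)]
    rw [ENNReal.toReal_sum (fun y _ => measure_ne_top μ _)]
    exact Finset.sum_congr rfl fun y _ => hSBprod y
  rw [hμeq]
  exact SBaux.comb_main hp0 hp1 f hg hfg hsum ha hb0 ht ht'
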